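/- For a Gaussian random variable z ~ N(μ, σ²) in ℝ and the one-sided truncation event {z ≤ c} with P(z ≤ c) > 0, the truncated variance Var(z | z ≤ c) is strictly less than σ². -/

import Mathlib

open MeasureTheory ProbabilityTheory Real Set Filter Topology
open scoped ENNReal NNReal

namespace Stmt11Aux

variable (μ : ℝ) (v : NNReal)

lemma pdf_deriv (hv : 0 < (v : ℝ)) (x : ℝ) :
    HasDerivAt (gaussianPDFReal μ v) (-((x - μ)/(v:ℝ)) * gaussianPDFReal μ v x) x := by
  have h1 : HasDerivAt (fun x : ℝ => -(x - μ)^2/(2*(v:ℝ)))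
      (-((2:ℕ) * (x - μ)^1 * 1)/(2*(v:ℝ))) x :=
    (((hasDerivAt_id x).sub_const μ).pow 2).neg.div_const (2*(v:ℝ))
  have h2 := (h1.exp).const_mul ((√(2*π*(v:ℝ)))⁻¹)
  have hfun : gaussianPDFReal μ v = fun x => (√(2*π*(v:ℝ)))⁻¹ * rexp (-(x - μ)^2/(2*(v:ℝ))) :=
    rfl
  rw [hfun]
  refine h2.congr_deriv ?_
  have hv' : (v : ℝ) ≠ 0 := hv.ne'
  push_cast
  field_simp

lemma integrable_one_mul (hv : 0 < (v : ℝ)) :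
    Integrable (fun x => (x - μ) * gaussianPDFReal μ v x) := by
  have hb : 0 < (2*(v:ℝ))⁻¹ := by positivity
  have h1 : Integrable (fun y : ℝ => y * rexp (-(2*(v:ℝ))⁻¹ * y^2)) := by
    simpa using integrable_rpow_mul_exp_neg_mul_sq hb (by norm_num : (-1:ℝ) < 1)
  have h2 := (h1.comp_sub_right μ).const_mul ((√(2*π*(v:ℝ)))⁻¹)
  refine h2.congr (Filter.Eventually.of_forall fun x => ?_)
  have harg : -(2*(v:ℝ))⁻¹ * (x - μ)^2 = -(x - μ)^2/(2*(v:ℝ)) := by ring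
  show _ = (x - μ) * ((√(2*π*(v:ℝ)))⁻¹ * rexp (-(x - μ)^2/(2*(v:ℝ))))
  rw [← harg]; ring

lemma integrable_sq_mul (hv : 0 < (v : ℝ)) :
    Integrable (fun x => (x - μ)^2 * gaussianPDFReal μ v x) := by
  have hb : 0 < (2*(v:ℝ))⁻¹ := by positivity
  have h1 : Integrable (fun y : ℝ => y^2 * rexp (-(2*(v:ℝ))⁻¹ * y^2)) := by
    have := integrable_rpow_mul_exp_neg_mul_sq hb (by norm_num : (-1:ℝ) < 2)
    simpa [Real.rpow_two] using this
  have h2 := (h1.comp_sub_right μ).const_mul ((√(2*π*(v:ℝ)))⁻¹)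
  refine h2.congr (Filter.Eventually.of_forall fun x => ?_)
  have harg : -(2*(v:ℝ))⁻¹ * (x - μ)^2 = -(x - μ)^2/(2*(v:ℝ)) := by ring
  show _ = (x - μ)^2 * ((√(2*π*(v:ℝ)))⁻¹ * rexp (-(x - μ)^2/(2*(v:ℝ))))
  rw [← harg]; ring

lemma tendsto_pdf_atBot (hv : 0 < (v : ℝ)) :
    Tendsto (gaussianPDFReal μ v) atBot (𝓝 0) := by
  have hsq : Tendsto (fun x : ℝ => (x - μ)^2) atBot atTop := by
    refine tendsto_atTop_mono' _ ?_ (tendsto_neg_atBot_atTop.comp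
      (tendsto_atBot_add_const_right _ (-μ) tendsto_id))
    filter_upwards [eventually_le_atBot (μ - 1)] with x hx
    show -(x + -μ) ≤ (x - μ)^2
    nlinarith
  have harg : Tendsto (fun x : ℝ => -(x - μ)^2/(2*(v:ℝ))) atBot atBot := by
    rw [show (fun x : ℝ => -(x - μ)^2/(2*(v:ℝ))) = fun x : ℝ => -((x - μ)^2/(2*(v:ℝ))) by
      ext x; ring]
    exact tendsto_neg_atTop_atBot.comp (hsq.atTop_div_const (by positivity))
  have h := (Real.tendsto_exp_atBot.comp harg).const_mul ((√(2*π*(v:ℝ)))⁻¹)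
  rw [mul_zero] at h
  exact h

lemma tendsto_mul_pdf_atBot (hv : 0 < (v : ℝ)) :
    Tendsto (fun x => (x - μ) * gaussianPDFReal μ v x) atBot (𝓝 0) := by
  have hb : 0 < (2*(v:ℝ))⁻¹ := by positivity
  have h0 : Tendsto (fun y : ℝ => y * rexp (-(2*(v:ℝ))⁻¹ * y^2)) atTop (𝓝 0) := by
    have h := (rpow_mul_exp_neg_mul_sq_isLittleO_exp_neg hb 1).trans_tendsto ?_
    · simpa using h
    · have h1 : Tendsto (fun x : ℝ => -(1/2) * x) atTop atBot :=
        tendsto_id.const_mul_atTop_of_neg (by norm_num)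
      exact Real.tendsto_exp_atBot.comp h1
  have h0' : Tendsto (fun y : ℝ => y * rexp (-(2*(v:ℝ))⁻¹ * y^2)) atBot (𝓝 0) := by
    have h := (h0.comp tendsto_neg_atBot_atTop).neg
    rw [neg_zero] at h
    refine h.congr fun y => ?_
    simp [Function.comp_def]
  have h2 := (h0'.comp (tendsto_atBot_add_const_right _ (-μ) tendsto_id)).const_mul
    ((√(2*π*(v:ℝ)))⁻¹)
  rw [mul_zero] at h2
  refine h2.congr fun x => ?_
  have harg : -(2*(v:ℝ))⁻¹ * (x - μ)^2 = -(x - μ)^2/(2*(v:ℝ)) := by ring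
  show _ = (x - μ) * ((√(2*π*(v:ℝ)))⁻¹ * rexp (-(x - μ)^2/(2*(v:ℝ))))
  simp only [Function.comp_def, id_eq]
  rw [show x + -μ = x - μ by ring, ← harg]
  ring


lemma ftc1 (hv : 0 < (v : ℝ)) (c : ℝ) :
    ∫ x in Iic c, (x - μ) * gaussianPDFReal μ v x = -((v:ℝ) * gaussianPDFReal μ v c) := by
  have hF : ∀ x ∈ Iic c, HasDerivAt (fun x => -((v:ℝ) * gaussianPDFReal μ v x))
      ((x - μ) * gaussianPDFReal μ v x) x := by
    intro x _
    have h := ((pdf_deriv μ v hv x).const_mul (v:ℝ)).neg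
    refine h.congr_deriv ?_
    field_simp
  have hlim : Tendsto (fun x => -((v:ℝ) * gaussianPDFReal μ v x)) atBot (𝓝 (0:ℝ)) := by
    have h := ((tendsto_pdf_atBot μ v hv).const_mul (v:ℝ)).neg
    simpa using h
  have h := integral_Iic_of_hasDerivAt_of_tendsto' hF
    ((integrable_one_mul μ v hv).integrableOn) hlim
  rw [h]; ring

lemma ftc2 (hv : 0 < (v : ℝ)) (c : ℝ) :
    ∫ x in Iic c, ((x - μ)^2 - (v:ℝ)) * gaussianPDFReal μ v x
      = -((v:ℝ) * (c - μ) * gaussianPDFReal μ v c) := by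
  have hF : ∀ x ∈ Iic c, HasDerivAt (fun x => (-(v:ℝ) * (x - μ)) * gaussianPDFReal μ v x)
      (((x - μ)^2 - (v:ℝ)) * gaussianPDFReal μ v x) x := by
    intro x _
    have h1 : HasDerivAt (fun x : ℝ => -(v:ℝ) * (x - μ)) (-(v:ℝ)) x := by
      simpa using ((hasDerivAt_id x).sub_const μ).const_mul (-(v:ℝ))
    have h := h1.mul (pdf_deriv μ v hv x)
    refine h.congr_deriv ?_
    field_simp
    ring
  have hint : IntegrableOn (fun x => ((x - μ)^2 - (v:ℝ)) * gaussianPDFReal μ v x) (Iic c) := by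
    have h := ((integrable_sq_mul μ v hv).sub
      ((integrable_gaussianPDFReal μ v).const_mul (v:ℝ))).integrableOn (s := Iic c)
    refine h.congr_fun (fun x _ => by simp only [Pi.sub_apply]; ring) measurableSet_Iic
  have hlim : Tendsto (fun x => (-(v:ℝ) * (x - μ)) * gaussianPDFReal μ v x) atBot (𝓝 (0:ℝ)) := by
    have h := (tendsto_mul_pdf_atBot μ v hv).const_mul (-(v:ℝ))
    rw [mul_zero] at h
    refine h.congr fun x => by ring
  have h := integral_Iic_of_hasDerivAt_of_tendsto' hF hint hlim
  rw [h]; ring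

lemma integral_cond (hv : v ≠ 0) (c : ℝ) (g : ℝ → ℝ) :
    ∫ x, g x ∂((gaussianReal μ v)[|Iic c]) =
      ((gaussianReal μ v) (Iic c)).toReal⁻¹ * ∫ x in Iic c, gaussianPDFReal μ v x * g x := by
  rw [ProbabilityTheory.cond, integral_smul_measure, ENNReal.toReal_inv, smul_eq_mul]
  congr 1
  rw [gaussianReal_of_var_ne_zero _ hv, restrict_withDensity measurableSet_Iic]
  have hpdf : (gaussianPDF μ v) = fun x => ((gaussianPDFReal μ v x).toNNReal : ℝ≥0∞) := rfl
  rw [hpdf, integral_withDensity_eq_integral_smul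
    ((measurable_gaussianPDFReal μ v).real_toNNReal) g]
  refine integral_congr_ae (Filter.Eventually.of_forall fun x => ?_)
  simp [NNReal.smul_def, Real.coe_toNNReal _ (gaussianPDFReal_nonneg μ v x)]

end Stmt11Aux

set_option maxHeartbeats 1000000 in
open Stmt11Aux in
theorem stmt11 (μ σ c : ℝ) (hσ : 0 < σ) (v : NNReal) (hv : (v : ℝ) = σ ^ 2)
    (hpos : 0 < (gaussianReal μ v) (Set.Iic c)) :
    (∫ z, z ^ 2 ∂((gaussianReal μ v)[|Set.Iic c])) -
      (∫ z, z ∂((gaussianReal μ v)[|Set.Iic c])) ^ 2 < σ ^ 2 := by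
  have hvpos : 0 < (v : ℝ) := by rw [hv]; positivity
  have hv0 : v ≠ 0 := by
    intro h
    rw [h] at hvpos
    simp at hvpos
  set f := fun x => gaussianPDFReal μ v x with hfdef
  have hfeq : gaussianPDFReal μ v = f := rfl
  obtain ⟨P, hPdef⟩ : ∃ P : ℝ, P = ∫ x in Set.Iic c, f x := ⟨_, rfl⟩
  obtain ⟨Q, hQdef⟩ : ∃ Q : ℝ, Q = f c := ⟨_, rfl⟩
  have hPnn : 0 ≤ P := by
    rw [hPdef]
    exact setIntegral_nonneg measurableSet_Iic fun x _ => gaussianPDFReal_nonneg μ v x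
  have happ : (gaussianReal μ v) (Set.Iic c) = ENNReal.ofReal P := by
    rw [hPdef]
    exact gaussianReal_apply_eq_integral μ hv0 _
  have hPpos : 0 < P := by
    by_contra h
    push_neg at h
    rw [happ, le_antisymm h hPnn] at hpos
    simp at hpos
  have hPt : ((gaussianReal μ v) (Set.Iic c)).toReal = P := by
    rw [happ, ENNReal.toReal_ofReal hPnn]
  have hQ : 0 < Q := by rw [hQdef]; exact gaussianPDFReal_pos μ v c hv0
  have if0 : IntegrableOn f (Set.Iic c) := (integrable_gaussianPDFReal μ v).integrableOn
  have if1 : IntegrableOn (fun x => (x - μ) * f x) (Set.Iic c) :=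
    (integrable_one_mul μ v hvpos).integrableOn
  have if2 : IntegrableOn (fun x => (x - μ)^2 * f x) (Set.Iic c) :=
    (integrable_sq_mul μ v hvpos).integrableOn
  have hftc1 : ∫ x in Set.Iic c, (x - μ) * f x = -((v:ℝ) * Q) := by
    rw [hQdef]; exact ftc1 μ v hvpos c
  have hftc2 : ∫ x in Set.Iic c, ((x - μ)^2 - (v:ℝ)) * f x = -((v:ℝ) * (c - μ) * Q) := by
    rw [hQdef]; exact ftc2 μ v hvpos c
  have hI1 : ∫ x in Set.Iic c, f x * x = μ * P - (v:ℝ) * Q := by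
    calc ∫ x in Set.Iic c, f x * x
        = ∫ x in Set.Iic c, ((x - μ) * f x + μ * f x) :=
          integral_congr_ae (Filter.Eventually.of_forall fun x => by ring)
      _ = (∫ x in Set.Iic c, (x - μ) * f x) + ∫ x in Set.Iic c, μ * f x :=
          integral_add if1 (if0.const_mul μ)
      _ = -((v:ℝ) * Q) + μ * P := by rw [hftc1, integral_const_mul, ← hPdef]
      _ = μ * P - (v:ℝ) * Q := by ring
  have hI2 : ∫ x in Set.Iic c, f x * x^2
      = ((v:ℝ) + μ^2) * P - (v:ℝ) * (c - μ) * Q - 2 * μ * ((v:ℝ) * Q) := by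
    calc ∫ x in Set.Iic c, f x * x^2
        = ∫ x in Set.Iic c, (((x - μ)^2 - (v:ℝ)) * f x
            + (2 * μ * ((x - μ) * f x) + ((v:ℝ) + μ^2) * f x)) :=
          integral_congr_ae (Filter.Eventually.of_forall fun x => by ring)
      _ = (∫ x in Set.Iic c, ((x - μ)^2 - (v:ℝ)) * f x)
            + ∫ x in Set.Iic c, (2 * μ * ((x - μ) * f x) + ((v:ℝ) + μ^2) * f x) := by
          refine integral_add ?_ ((if1.const_mul (2*μ)).add (if0.const_mul ((v:ℝ) + μ^2)))
          exact MeasureTheory.IntegrableOn.congr_fun (if2.sub (if0.const_mul (v:ℝ)))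
            (fun x _ => by simp only [Pi.sub_apply]; ring) measurableSet_Iic
      _ = -((v:ℝ) * (c - μ) * Q) + (2 * μ * (-((v:ℝ) * Q)) + ((v:ℝ) + μ^2) * P) := by
          rw [hftc2, integral_add (if1.const_mul (2*μ)) (if0.const_mul ((v:ℝ) + μ^2)),
            integral_const_mul, integral_const_mul, hftc1, ← hPdef]
      _ = ((v:ℝ) + μ^2) * P - (v:ℝ) * (c - μ) * Q - 2 * μ * ((v:ℝ) * Q) := by ring
  have hKint : ∫ x in Set.Iic c, (c - x) * f x = (c - μ) * P + (v:ℝ) * Q := by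
    calc ∫ x in Set.Iic c, (c - x) * f x
        = ∫ x in Set.Iic c, ((c - μ) * f x - (x - μ) * f x) :=
          integral_congr_ae (Filter.Eventually.of_forall fun x => by ring)
      _ = (∫ x in Set.Iic c, (c - μ) * f x) - ∫ x in Set.Iic c, (x - μ) * f x :=
          integral_sub (if0.const_mul (c - μ)) if1
      _ = (c - μ) * P + (v:ℝ) * Q := by rw [hftc1, integral_const_mul, ← hPdef]; ring
  have hK : 0 < (c - μ) * P + (v:ℝ) * Q := by
    rw [← hKint]
    rw [setIntegral_pos_iff_support_of_nonneg_ae]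
    · refine lt_of_lt_of_le ?_ (measure_mono (show Set.Iio c ⊆ _ from ?_))
      · rw [Real.volume_Iio]
        exact ENNReal.zero_lt_top
      · intro x hx
        have hxc : x < c := Set.mem_Iio.mp hx
        refine ⟨?_, hxc.le⟩
        have : 0 < (c - x) * f x :=
          mul_pos (by linarith) (gaussianPDFReal_pos μ v x hv0)
        exact Function.mem_support.mpr this.ne'
    · filter_upwards [ae_restrict_mem measurableSet_Iic] with x hx
      exact mul_nonneg (by simpa using hx) (gaussianPDFReal_nonneg μ v x)
    · exact MeasureTheory.IntegrableOn.congr_fun ((if0.const_mul (c - μ)).sub if1)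
        (fun x _ => by simp only [Pi.sub_apply]; ring) measurableSet_Iic
  have hE1 : ∫ z, z ∂((gaussianReal μ v)[|Set.Iic c]) = P⁻¹ * (μ * P - (v:ℝ) * Q) := by
    rw [integral_cond μ v hv0 c (fun z => z), hPt, hfeq, hI1]
  have hE2 : ∫ z, z^2 ∂((gaussianReal μ v)[|Set.Iic c])
      = P⁻¹ * (((v:ℝ) + μ^2) * P - (v:ℝ) * (c - μ) * Q - 2 * μ * ((v:ℝ) * Q)) := by
    rw [integral_cond μ v hv0 c (fun z => z^2), hPt, hfeq, hI2]
  rw [hE1, hE2, ← hv]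
  have hgoal : P⁻¹ * (((v:ℝ) + μ^2) * P - (v:ℝ) * (c - μ) * Q - 2 * μ * ((v:ℝ) * Q))
      - (P⁻¹ * (μ * P - (v:ℝ) * Q))^2
      = (v:ℝ) - (v:ℝ) * Q * ((c - μ) * P + (v:ℝ) * Q) / P^2 := by
    field_simp
    ring
  rw [hgoal]
  have hfinal : 0 < (v:ℝ) * Q * ((c - μ) * P + (v:ℝ) * Q) / P^2 :=
    div_pos (mul_pos (mul_pos hvpos hQ) hK) (by positivity)
  linarith
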